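/- If A_n → A in the strong operator topology and μ_n ⇒ μ weakly, then the pushforward measures A_n μ_n converge weakly to A μ. -/

import Mathlib

open MeasureTheory Filter Topology
open scoped ENNReal NNReal

section Aux

open Metric Set ENNReal NNReal

lemma lip_thickening_preimage {Ω : Type*} [PseudoMetricSpace Ω] {T : Ω → Ω} {L : ℝ≥0}
    (hL : 0 < L) (hT : LipschitzWith L T) (B : Set Ω) (r : ℝ) :
    Metric.thickening r (T ⁻¹' B) ⊆ T ⁻¹' (Metric.thickening ((L : ℝ) * r) B) := by
  intro x hx
  rw [Metric.mem_thickening_iff] at hx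
  obtain ⟨y, hy, hd⟩ := hx
  have h1 : dist (T x) (T y) ≤ (L : ℝ) * dist x y := hT.dist_le_mul x y
  have h2 : (L : ℝ) * dist x y < (L : ℝ) * r := by
    have : (0:ℝ) < L := hL
    exact mul_lt_mul_of_pos_left hd this
  exact Metric.mem_thickening_iff.mpr ⟨T y, hy, h1.trans_lt h2⟩

lemma levyProkhorovEDist_map_le {Ω : Type*} [MeasurableSpace Ω] [PseudoMetricSpace Ω]
    [OpensMeasurableSpace Ω]
    (κ ξ : Measure Ω) [IsFiniteMeasure κ] [IsFiniteMeasure ξ]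
    {T : Ω → Ω} (hTm : Measurable T) {L : ℝ≥0} (hL : 1 ≤ L) (hT : LipschitzWith L T) :
    levyProkhorovEDist (κ.map T) (ξ.map T) ≤ (L : ℝ≥0∞) * levyProkhorovEDist κ ξ := by
  have hL0 : (0:ℝ≥0) < L := lt_of_lt_of_le one_pos hL
  have hLne : (L : ℝ≥0∞) ≠ 0 := by exact_mod_cast hL0.ne'
  have hLtop : (L : ℝ≥0∞) ≠ ∞ := coe_ne_top
  set d := levyProkhorovEDist κ ξ with hd
  have hdne : d ≠ ∞ := levyProkhorovEDist_ne_top κ ξ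
  have key : ∀ c : ℝ≥0∞, d < c → c ≠ ∞ →
      levyProkhorovEDist (κ.map T) (ξ.map T) ≤ (L : ℝ≥0∞) * c := by
    intro c hc hctop
    apply levyProkhorovEDist_le_of_forall
    intro ε B hε hεtop hB
    have hcε : c ≤ ε := le_trans (le_trans (by
        simpa using mul_le_mul_left (by exact_mod_cast hL : (1:ℝ≥0∞) ≤ L) c) le_rfl) hε.le
    have hLcε : (L : ℝ≥0∞) * c ≤ ε := hε.le
    have hsub : ∀ S : Set Ω, Metric.thickening c.toReal (T ⁻¹' S)
        ⊆ T ⁻¹' (Metric.thickening ε.toReal S) := by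
      intro S
      refine (lip_thickening_preimage hL0 hT S c.toReal).trans ?_
      apply Set.preimage_mono
      apply Metric.thickening_mono
      have : ((L : ℝ≥0∞) * c).toReal = (L : ℝ) * c.toReal := by
        rw [ENNReal.toReal_mul, ENNReal.coe_toReal]
      rw [← this]
      exact ENNReal.toReal_mono hεtop.ne hLcε
    have hmeas : MeasurableSet (Metric.thickening ε.toReal B) :=
      Metric.isOpen_thickening.measurableSet
    constructor
    · rw [Measure.map_apply hTm hB, Measure.map_apply hTm hmeas]
      calc κ (T ⁻¹' B) ≤ ξ (Metric.thickening c.toReal (T ⁻¹' B)) + c :=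
            left_measure_le_of_levyProkhorovEDist_lt hc (hTm hB)
        _ ≤ ξ (T ⁻¹' Metric.thickening ε.toReal B) + ε :=
            add_le_add (measure_mono (hsub B)) hcε
    · rw [Measure.map_apply hTm hB, Measure.map_apply hTm hmeas]
      calc ξ (T ⁻¹' B) ≤ κ (Metric.thickening c.toReal (T ⁻¹' B)) + c :=
            right_measure_le_of_levyProkhorovEDist_lt hc (hTm hB)
        _ ≤ κ (T ⁻¹' Metric.thickening ε.toReal B) + ε :=
            add_le_add (measure_mono (hsub B)) hcε
  apply ENNReal.le_of_forall_pos_le_add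
  intro η hη _
  have hc : d < d + (η : ℝ≥0∞) / L := by
    apply ENNReal.lt_add_right hdne
    simp [ENNReal.div_eq_zero_iff, hLtop, hη.ne']
  have hctop : d + (η : ℝ≥0∞) / L ≠ ∞ := by
    simp [hdne, ENNReal.div_eq_top, hLne, hLtop]
  calc levyProkhorovEDist (κ.map T) (ξ.map T) ≤ (L:ℝ≥0∞) * (d + (η:ℝ≥0∞)/L) :=
        key _ hc hctop
    _ = (L:ℝ≥0∞) * d + (L:ℝ≥0∞) * ((η:ℝ≥0∞)/L) := by ring
    _ = (L:ℝ≥0∞) * d + η := by rw [ENNReal.mul_div_cancel hLne hLtop]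

end Aux

/-- Weak convergence of a sequence of (probability) measures, tested against bounded
continuous functions. -/
def WeakTendsto {E : Type*} [TopologicalSpace E] [MeasurableSpace E]
    (μ : ℕ → Measure E) (ν : Measure E) : Prop :=
  ∀ f : BoundedContinuousFunction E ℝ,
    Filter.Tendsto (fun n => ∫ x, f x ∂(μ n)) Filter.atTop (nhds (∫ x, f x ∂ν))

/-- If `Aₙ → A` strongly and `μₙ ⇒ μ` weakly, then `Aₙ μₙ ⇒ A μ` weakly. -/
theorem map_weakTendsto_of_strong_tendsto
    {E : Type*} [NormedAddCommGroup E] [NormedSpace ℝ E] [CompleteSpace E]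
    [TopologicalSpace.SeparableSpace E] [MeasurableSpace E] [BorelSpace E]
    (A : ℕ → E →L[ℝ] E) (A₀ : E →L[ℝ] E)
    (μ : ℕ → Measure E) (ν : Measure E)
    (hμ : ∀ n, IsProbabilityMeasure (μ n)) (hν : IsProbabilityMeasure ν)
    (hA : ∀ x : E, Filter.Tendsto (fun n => A n x) Filter.atTop (nhds (A₀ x)))
    (hw : WeakTendsto μ ν) :
    WeakTendsto (fun n => (μ n).map (A n)) (ν.map A₀) := by
  haveI := hν
  -- uniform bound on the operator norms (Banach–Steinhaus)
  obtain ⟨C, hC⟩ : ∃ C, ∀ n, ‖A n‖ ≤ C := by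
    apply banach_steinhaus
    intro x
    obtain ⟨c, hc⟩ := ((hA x).norm.bddAbove_range).imp (fun c hc i => hc ⟨i, rfl⟩)
    exact ⟨c, hc⟩
  set L : ℝ≥0 := Real.toNNReal (max C 1) with hLdef
  have hL1 : (1 : ℝ≥0) ≤ L := by
    rw [hLdef]
    rw [← Real.toNNReal_one]
    exact Real.toNNReal_mono (le_max_right _ _)
  have hLip : ∀ n, LipschitzWith L (A n) := by
    intro n
    apply (A n).lipschitz.weaken
    rw [← norm_toNNReal]
    exact Real.toNNReal_mono ((hC n).trans (le_max_left _ _))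
  -- probability measures
  let μP : ℕ → ProbabilityMeasure E := fun n => ⟨μ n, hμ n⟩
  let νP : ProbabilityMeasure E := ⟨ν, hν⟩
  let P : ℕ → ProbabilityMeasure E := fun n =>
    ⟨(μ n).map (A n), by
      haveI := hμ n
      exact Measure.isProbabilityMeasure_map (A n).continuous.measurable.aemeasurable⟩
  let R : ℕ → ProbabilityMeasure E := fun n =>
    ⟨ν.map (A n), Measure.isProbabilityMeasure_map (A n).continuous.measurable.aemeasurable⟩
  let Q : ProbabilityMeasure E :=
    ⟨ν.map A₀, Measure.isProbabilityMeasure_map A₀.continuous.measurable.aemeasurable⟩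
  have hwP : Filter.Tendsto μP Filter.atTop (nhds νP) :=
    ProbabilityMeasure.tendsto_iff_forall_integral_tendsto.mpr hw
  -- A_n ν ⇒ A₀ ν  (dominated convergence)
  have hR : Filter.Tendsto R Filter.atTop (nhds Q) := by
    rw [ProbabilityMeasure.tendsto_iff_forall_integral_tendsto]
    intro f
    have he : ∀ n, ∫ x, f x ∂((R n : Measure E)) = ∫ x, f (A n x) ∂ν := fun n =>
      integral_map (A n).continuous.measurable.aemeasurable
        f.continuous.aestronglyMeasurable
    have he0 : ∫ x, f x ∂((Q : Measure E)) = ∫ x, f (A₀ x) ∂ν :=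
      integral_map A₀.continuous.measurable.aemeasurable f.continuous.aestronglyMeasurable
    simp only [he, he0]
    apply tendsto_integral_of_dominated_convergence (fun _ => ‖f‖)
    · intro n
      exact (f.continuous.comp (A n).continuous).aestronglyMeasurable
    · exact integrable_const ‖f‖
    · intro n
      exact Filter.Eventually.of_forall fun x => f.norm_coe_le_norm _
    · exact Filter.Eventually.of_forall fun x => (f.continuous.tendsto _).comp (hA x)
  -- move to the Lévy-Prokhorov metric
  let h := MeasureTheory.LevyProkhorov.probabilityMeasureHomeomorph (Ω := E)
  have hd1 : Filter.Tendsto (fun n => dist (h (μP n)) (h νP)) Filter.atTop (nhds 0) :=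
    tendsto_iff_dist_tendsto_zero.mp ((h.continuous.tendsto νP).comp hwP)
  have hd2 : Filter.Tendsto (fun n => dist (h (R n)) (h Q)) Filter.atTop (nhds 0) :=
    tendsto_iff_dist_tendsto_zero.mp ((h.continuous.tendsto Q).comp hR)
  have bound : ∀ n, dist (h (P n)) (h Q)
      ≤ (L : ℝ) * dist (h (μP n)) (h νP) + dist (h (R n)) (h Q) := by
    intro n
    haveI := hμ n
    haveI : IsProbabilityMeasure ((μ n).map (A n)) := (P n).2
    haveI : IsProbabilityMeasure (ν.map (A n)) := (R n).2
    haveI : IsProbabilityMeasure (ν.map A₀) := Q.2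
    have e1 : levyProkhorovEDist ((μ n).map (A n)) (ν.map A₀)
        ≤ (L : ℝ≥0∞) * levyProkhorovEDist (μ n) ν
          + levyProkhorovEDist (ν.map (A n)) (ν.map A₀) := by
      calc levyProkhorovEDist ((μ n).map (A n)) (ν.map A₀)
          ≤ levyProkhorovEDist ((μ n).map (A n)) (ν.map (A n))
            + levyProkhorovEDist (ν.map (A n)) (ν.map A₀) :=
            levyProkhorovEDist_triangle _ _ _
        _ ≤ (L : ℝ≥0∞) * levyProkhorovEDist (μ n) ν
            + levyProkhorovEDist (ν.map (A n)) (ν.map A₀) := by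
            gcongr
            exact levyProkhorovEDist_map_le (μ n) ν (A n).continuous.measurable hL1 (hLip n)
    have hfin : (L : ℝ≥0∞) * levyProkhorovEDist (μ n) ν
        + levyProkhorovEDist (ν.map (A n)) (ν.map A₀) ≠ ⊤ := by
      apply ENNReal.add_ne_top.mpr
      exact ⟨ENNReal.mul_ne_top ENNReal.coe_ne_top (levyProkhorovEDist_ne_top _ _),
        levyProkhorovEDist_ne_top _ _⟩
    show levyProkhorovDist ((μ n).map (A n)) (ν.map A₀)
      ≤ (L : ℝ) * levyProkhorovDist (μ n) ν + levyProkhorovDist (ν.map (A n)) (ν.map A₀)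
    calc levyProkhorovDist ((μ n).map (A n)) (ν.map A₀)
        = (levyProkhorovEDist ((μ n).map (A n)) (ν.map A₀)).toReal := rfl
      _ ≤ ((L : ℝ≥0∞) * levyProkhorovEDist (μ n) ν
            + levyProkhorovEDist (ν.map (A n)) (ν.map A₀)).toReal :=
          ENNReal.toReal_mono hfin e1
      _ = (L : ℝ) * levyProkhorovDist (μ n) ν
            + levyProkhorovDist (ν.map (A n)) (ν.map A₀) := by
          rw [ENNReal.toReal_add (ENNReal.mul_ne_top ENNReal.coe_ne_top
            (levyProkhorovEDist_ne_top _ _)) (levyProkhorovEDist_ne_top _ _),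
            ENNReal.toReal_mul, ENNReal.coe_toReal]
          rfl
  have hdist : Filter.Tendsto (fun n => dist (h (P n)) (h Q)) Filter.atTop (nhds 0) := by
    have hz : Filter.Tendsto
        (fun n => (L : ℝ) * dist (h (μP n)) (h νP) + dist (h (R n)) (h Q))
        Filter.atTop (nhds 0) := by
      have := (hd1.const_mul (L : ℝ)).add hd2
      simpa using this
    exact squeeze_zero (fun n => dist_nonneg) bound hz
  have hLP : Filter.Tendsto (fun n => h (P n)) Filter.atTop (nhds (h Q)) :=
    tendsto_iff_dist_tendsto_zero.mpr hdist
  have hPQ : Filter.Tendsto P Filter.atTop (nhds Q) := by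
    have := (h.symm.continuous.tendsto (h Q)).comp hLP
    exact this
  exact ProbabilityMeasure.tendsto_iff_forall_integral_tendsto.mp hPQ
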